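/- Assume 0.9·d_{i0} ≤ d_i ≤ 1.1·d_{i0} for every i, 0.9·d_0 ≤ d ≤ 1.1·d_0, ρ ≥ d² + 2‖e‖², 0 < ε ≤ 1/15, the Local RIP holds, and ‖𝒜*(e)‖ ≤ εd_0/(10√2·sκ). Let z_1 = (h^{(1)},x^{(1)}) and z_2 = (h^{(2)},x^{(2)}) be points of ℂ^{Ks}×ℂ^{Ns} and set z(λ) = (1−λ)z_1 + λz_2. If z_1 ∈ 𝒩_ε and z(λ) ∈ 𝒩_F̃ for every λ ∈ [0,1], then z_2 ∈ 𝒩_ε. -/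

import Mathlib

noncomputable section
open Finset ComplexConjugate

namespace RGD

/-- Squared Euclidean norm of a complex vector. -/
def vnormSq {n : ℕ} (v : Fin n → ℂ) : ℝ := ∑ j, ‖v j‖ ^ 2

/-- Euclidean norm of a complex vector. -/
def vnorm {n : ℕ} (v : Fin n → ℂ) : ℝ := Real.sqrt (vnormSq v)

/-- Inner product, conjugate-linear in the first argument. -/
def vinner {n : ℕ} (u v : Fin n → ℂ) : ℂ := ∑ j, conj (u j) * v j

/-- Squared Frobenius norm of a matrix. -/
def frobSq {K N : ℕ} (Z : Matrix (Fin K) (Fin N) ℂ) : ℝ := ∑ k, ∑ j, ‖Z k j‖ ^ 2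

/-- Frobenius norm of a matrix. -/
def frob {K N : ℕ} (Z : Matrix (Fin K) (Fin N) ℂ) : ℝ := Real.sqrt (frobSq Z)

/-- Frobenius inner product `⟨U,V⟩ = Tr(U*V)`, conjugate-linear in the first argument. -/
def finner {K N : ℕ} (U V : Matrix (Fin K) (Fin N) ℂ) : ℂ := ∑ k, ∑ j, conj (U k j) * V k j

/-- Spectral (operator) norm of a matrix: sup of `‖Zv‖` over the closed unit ball. -/
def opNorm {K N : ℕ} (Z : Matrix (Fin K) (Fin N) ℂ) : ℝ :=
  sSup {r : ℝ | ∃ v : Fin N → ℂ, vnorm v ≤ 1 ∧ r = vnorm (Z.mulVec v)}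

/-- Squared Frobenius norm of a block-diagonal matrix, given by its diagonal blocks. -/
def famFrobSq {K N s : ℕ} (Z : Fin s → Matrix (Fin K) (Fin N) ℂ) : ℝ := ∑ i, frobSq (Z i)

/-- Frobenius norm of a block-diagonal matrix, given by its diagonal blocks. -/
def famFrob {K N s : ℕ} (Z : Fin s → Matrix (Fin K) (Fin N) ℂ) : ℝ := Real.sqrt (famFrobSq Z)

/-- The rank-one matrix `u v*`. -/
def rankOne {K N : ℕ} (u : Fin K → ℂ) (v : Fin N → ℂ) : Matrix (Fin K) (Fin N) ℂ :=
  Matrix.of fun k j => u k * conj (v j)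

/-- `ℋ(h,x)`: block-diagonal matrix with `i`-th block `hᵢ xᵢ*`. -/
def Hmap {K N s : ℕ} (h : Fin s → Fin K → ℂ) (x : Fin s → Fin N → ℂ) :
    Fin s → Matrix (Fin K) (Fin N) ℂ := fun i => rankOne (h i) (x i)

/-- `𝒜ᵢ(Z) = (bₗ* Z aₗ)ₗ`. -/
def calAi {K N L : ℕ} (b : Fin L → Fin K → ℂ) (a : Fin L → Fin N → ℂ)
    (Z : Matrix (Fin K) (Fin N) ℂ) : Fin L → ℂ :=
  fun l => vinner (b l) (Z.mulVec (a l))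

/-- `𝒜(Z) = Σᵢ 𝒜ᵢ(Zᵢ)` on block-diagonal matrices. -/
def calA {K N L s : ℕ} (b : Fin L → Fin K → ℂ) (a : Fin s → Fin L → Fin N → ℂ)
    (Z : Fin s → Matrix (Fin K) (Fin N) ℂ) : Fin L → ℂ :=
  fun l => ∑ i, calAi b (a i) (Z i) l

/-- `𝒜ᵢ*(z) = Σₗ zₗ bₗ aₗ*`. -/
def calAdj {K N L : ℕ} (b : Fin L → Fin K → ℂ) (a : Fin L → Fin N → ℂ)
    (z : Fin L → ℂ) : Matrix (Fin K) (Fin N) ℂ :=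
  Matrix.of fun k j => ∑ l, z l * b l k * conj (a l j)

/-- `‖𝒜*(e)‖ = maxᵢ ‖𝒜ᵢ*(e)‖` (operator norms). -/
def AadjNorm {K N L s : ℕ} (b : Fin L → Fin K → ℂ) (a : Fin s → Fin L → Fin N → ℂ)
    (e : Fin L → ℂ) : ℝ :=
  ⨆ i : Fin s, opNorm (calAdj b (a i) e)

/-- `B*B = I_K`, expressed in terms of the columns `bₗ` of `B*`. -/
def BtBeqI {K L : ℕ} (b : Fin L → Fin K → ℂ) : Prop :=
  ∀ k k' : Fin K, (∑ l, b l k * conj (b l k')) = if k = k' then (1 : ℂ) else 0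

/-- `μ ≥ μ_h`, i.e. `√L ‖B h_{i0}‖_∞ ≤ μ ‖h_{i0}‖` for all `i`. -/
def muhLe {K L s : ℕ} (b : Fin L → Fin K → ℂ) (h0 : Fin s → Fin K → ℂ) (μ : ℝ) : Prop :=
  ∀ i l, Real.sqrt L * ‖vinner (b l) (h0 i)‖ ≤ μ * vnorm (h0 i)

/-- `d₀ = √(Σᵢ d_{i0}²)`. -/
def dtot {s : ℕ} (d0 : Fin s → ℝ) : ℝ := Real.sqrt (∑ i, d0 i ^ 2)

/-- Condition number `κ = (maxᵢ d_{i0}) / (minᵢ d_{i0})`. -/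
def kappa {s : ℕ} (d0 : Fin s → ℝ) : ℝ := (⨆ i, d0 i) / (⨅ i, d0 i)

/-- The observation `y = 𝒜(ℋ(h₀,x₀)) + e`. -/
def yvec {K N L s : ℕ} (b : Fin L → Fin K → ℂ) (a : Fin s → Fin L → Fin N → ℂ)
    (h0 : Fin s → Fin K → ℂ) (x0 : Fin s → Fin N → ℂ) (e : Fin L → ℂ) : Fin L → ℂ :=
  fun l => calA b a (Hmap h0 x0) l + e l

/-- `F(h,x) = ‖𝒜(ℋ(h,x)) − y‖²`. -/
def Fobj {K N L s : ℕ} (b : Fin L → Fin K → ℂ) (a : Fin s → Fin L → Fin N → ℂ)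
    (h0 : Fin s → Fin K → ℂ) (x0 : Fin s → Fin N → ℂ) (e : Fin L → ℂ)
    (h : Fin s → Fin K → ℂ) (x : Fin s → Fin N → ℂ) : ℝ :=
  vnormSq (fun l => calA b a (Hmap h x) l - yvec b a h0 x0 e l)

def G0 (z : ℝ) : ℝ := max (z - 1) 0 ^ 2

def G0' (z : ℝ) : ℝ := 2 * max (z - 1) 0

/-- The `i`-th regularizer `Gᵢ(hᵢ,xᵢ)` (including the factor `ρ`). -/
def Gi {K N L : ℕ} (b : Fin L → Fin K → ℂ) (ρ μ di : ℝ)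
    (hi : Fin K → ℂ) (xi : Fin N → ℂ) : ℝ :=
  ρ * (G0 (vnormSq hi / (2 * di)) + G0 (vnormSq xi / (2 * di))
    + ∑ l, G0 ((L : ℝ) * ‖vinner (b l) hi‖ ^ 2 / (8 * di * μ ^ 2)))

/-- The regularizer `G(h,x) = Σᵢ Gᵢ(hᵢ,xᵢ)`. -/
def Greg {K N L s : ℕ} (b : Fin L → Fin K → ℂ) (ρ μ : ℝ) (dd : Fin s → ℝ)
    (h : Fin s → Fin K → ℂ) (x : Fin s → Fin N → ℂ) : ℝ :=
  ∑ i, Gi b ρ μ (dd i) (h i) (x i)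

/-- `F̃ = F + G`. -/
def Ftil {K N L s : ℕ} (b : Fin L → Fin K → ℂ) (a : Fin s → Fin L → Fin N → ℂ)
    (h0 : Fin s → Fin K → ℂ) (x0 : Fin s → Fin N → ℂ) (e : Fin L → ℂ)
    (ρ μ : ℝ) (dd : Fin s → ℝ)
    (h : Fin s → Fin K → ℂ) (x : Fin s → Fin N → ℂ) : ℝ :=
  Fobj b a h0 x0 e h x + Greg b ρ μ dd h x

/-- The residual `𝒜(ℋ(h,x)) − y`. -/
def residual {K N L s : ℕ} (b : Fin L → Fin K → ℂ) (a : Fin s → Fin L → Fin N → ℂ)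
    (h0 : Fin s → Fin K → ℂ) (x0 : Fin s → Fin N → ℂ) (e : Fin L → ℂ)
    (h : Fin s → Fin K → ℂ) (x : Fin s → Fin N → ℂ) : Fin L → ℂ :=
  fun l => calA b a (Hmap h x) l - yvec b a h0 x0 e l

/-- Wirtinger gradient `∇F_{hᵢ} = 𝒜ᵢ*(𝒜(ℋ(h,x)) − y) xᵢ`. -/
def gradFh {K N L s : ℕ} (b : Fin L → Fin K → ℂ) (a : Fin s → Fin L → Fin N → ℂ)
    (h0 : Fin s → Fin K → ℂ) (x0 : Fin s → Fin N → ℂ) (e : Fin L → ℂ)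
    (h : Fin s → Fin K → ℂ) (x : Fin s → Fin N → ℂ) (i : Fin s) : Fin K → ℂ :=
  (calAdj b (a i) (residual b a h0 x0 e h x)).mulVec (x i)

/-- Wirtinger gradient `∇F_{xᵢ} = (𝒜ᵢ*(𝒜(ℋ(h,x)) − y))* hᵢ`. -/
def gradFx {K N L s : ℕ} (b : Fin L → Fin K → ℂ) (a : Fin s → Fin L → Fin N → ℂ)
    (h0 : Fin s → Fin K → ℂ) (x0 : Fin s → Fin N → ℂ) (e : Fin L → ℂ)
    (h : Fin s → Fin K → ℂ) (x : Fin s → Fin N → ℂ) (i : Fin s) : Fin N → ℂ :=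
  (calAdj b (a i) (residual b a h0 x0 e h x)).conjTranspose.mulVec (h i)

/-- Wirtinger gradient `∇G_{hᵢ}`. -/
def gradGh {K L s : ℕ} (b : Fin L → Fin K → ℂ) (ρ μ : ℝ) (dd : Fin s → ℝ)
    (h : Fin s → Fin K → ℂ) (i : Fin s) : Fin K → ℂ :=
  fun k => ((ρ / (2 * dd i) : ℝ) : ℂ) *
    (((G0' (vnormSq (h i) / (2 * dd i)) : ℝ) : ℂ) * h i k
      + (((L : ℝ) / (4 * μ ^ 2) : ℝ) : ℂ) *
        ∑ l, ((G0' ((L : ℝ) * ‖vinner (b l) (h i)‖ ^ 2 / (8 * dd i * μ ^ 2)) : ℝ) : ℂ)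
          * (vinner (b l) (h i) * b l k))

/-- Wirtinger gradient `∇G_{xᵢ}`. -/
def gradGx {N s : ℕ} (ρ : ℝ) (dd : Fin s → ℝ)
    (x : Fin s → Fin N → ℂ) (i : Fin s) : Fin N → ℂ :=
  fun j => ((ρ / (2 * dd i) : ℝ) : ℂ) * (((G0' (vnormSq (x i) / (2 * dd i)) : ℝ) : ℂ) * x i j)

/-- `∇F̃_{hᵢ} = ∇F_{hᵢ} + ∇G_{hᵢ}`. -/
def gradH {K N L s : ℕ} (b : Fin L → Fin K → ℂ) (a : Fin s → Fin L → Fin N → ℂ)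
    (h0 : Fin s → Fin K → ℂ) (x0 : Fin s → Fin N → ℂ) (e : Fin L → ℂ)
    (ρ μ : ℝ) (dd : Fin s → ℝ)
    (h : Fin s → Fin K → ℂ) (x : Fin s → Fin N → ℂ) (i : Fin s) : Fin K → ℂ :=
  fun k => gradFh b a h0 x0 e h x i k + gradGh b ρ μ dd h i k

/-- `∇F̃_{xᵢ} = ∇F_{xᵢ} + ∇G_{xᵢ}`. -/
def gradX {K N L s : ℕ} (b : Fin L → Fin K → ℂ) (a : Fin s → Fin L → Fin N → ℂ)
    (h0 : Fin s → Fin K → ℂ) (x0 : Fin s → Fin N → ℂ) (e : Fin L → ℂ)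
    (ρ μ : ℝ) (dd : Fin s → ℝ)
    (h : Fin s → Fin K → ℂ) (x : Fin s → Fin N → ℂ) (i : Fin s) : Fin N → ℂ :=
  fun j => gradFx b a h0 x0 e h x i j + gradGx ρ dd x i j

/-- `‖∇F̃(h,x)‖²` (squared norm of the stacked Wirtinger gradient). -/
def gradNormSq {K N L s : ℕ} (b : Fin L → Fin K → ℂ) (a : Fin s → Fin L → Fin N → ℂ)
    (h0 : Fin s → Fin K → ℂ) (x0 : Fin s → Fin N → ℂ) (e : Fin L → ℂ)
    (ρ μ : ℝ) (dd : Fin s → ℝ)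
    (h : Fin s → Fin K → ℂ) (x : Fin s → Fin N → ℂ) : ℝ :=
  ∑ i, vnormSq (gradH b a h0 x0 e ρ μ dd h x i) + ∑ i, vnormSq (gradX b a h0 x0 e ρ μ dd h x i)

/-- `‖∇F̃(h',x') − ∇F̃(h,x)‖²`. -/
def gradDiffNormSq {K N L s : ℕ} (b : Fin L → Fin K → ℂ) (a : Fin s → Fin L → Fin N → ℂ)
    (h0 : Fin s → Fin K → ℂ) (x0 : Fin s → Fin N → ℂ) (e : Fin L → ℂ)
    (ρ μ : ℝ) (dd : Fin s → ℝ)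
    (h : Fin s → Fin K → ℂ) (x : Fin s → Fin N → ℂ)
    (h' : Fin s → Fin K → ℂ) (x' : Fin s → Fin N → ℂ) : ℝ :=
  ∑ i, vnormSq (fun k => gradH b a h0 x0 e ρ μ dd h' x' i k - gradH b a h0 x0 e ρ μ dd h x i k)
  + ∑ i, vnormSq (fun j => gradX b a h0 x0 e ρ μ dd h' x' i j - gradX b a h0 x0 e ρ μ dd h x i j)

/-- Membership in `𝒩_d`. -/
def inNd {K N s : ℕ} (d0 : Fin s → ℝ)
    (h : Fin s → Fin K → ℂ) (x : Fin s → Fin N → ℂ) : Prop :=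
  ∀ i, vnorm (h i) ≤ 2 * Real.sqrt (d0 i) ∧ vnorm (x i) ≤ 2 * Real.sqrt (d0 i)

/-- Membership in `𝒩_μ`. -/
def inNmu {K L s : ℕ} (b : Fin L → Fin K → ℂ) (d0 : Fin s → ℝ) (μ : ℝ)
    (h : Fin s → Fin K → ℂ) : Prop :=
  ∀ i, ∀ l, Real.sqrt L * ‖vinner (b l) (h i)‖ ≤ 4 * Real.sqrt (d0 i) * μ

/-- `δᵢ(hᵢ,xᵢ) = ‖hᵢxᵢ* − h_{i0}x_{i0}*‖_F / d_{i0}`. -/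
def deltaI {K N : ℕ} (h0i : Fin K → ℂ) (x0i : Fin N → ℂ) (d0i : ℝ)
    (hi : Fin K → ℂ) (xi : Fin N → ℂ) : ℝ :=
  frob (rankOne hi xi - rankOne h0i x0i) / d0i

/-- Membership in `𝒩_ε`. -/
def inNeps {K N s : ℕ} (h0 : Fin s → Fin K → ℂ) (x0 : Fin s → Fin N → ℂ)
    (d0 : Fin s → ℝ) (ε : ℝ)
    (h : Fin s → Fin K → ℂ) (x : Fin s → Fin N → ℂ) : Prop :=
  ∀ i, deltaI (h0 i) (x0 i) (d0 i) (h i) (x i) ≤ ε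

/-- The global relative error `δ(h,x) = ‖ℋ(h,x) − X₀‖_F / d₀`. -/
def deltaTot {K N s : ℕ} (h0 : Fin s → Fin K → ℂ) (x0 : Fin s → Fin N → ℂ)
    (d0 : Fin s → ℝ)
    (h : Fin s → Fin K → ℂ) (x : Fin s → Fin N → ℂ) : ℝ :=
  famFrob (fun i => Hmap h x i - Hmap h0 x0 i) / dtot d0

/-- Membership in `𝒩_F̃`. -/
def inNF {K N L s : ℕ} (b : Fin L → Fin K → ℂ) (a : Fin s → Fin L → Fin N → ℂ)
    (h0 : Fin s → Fin K → ℂ) (x0 : Fin s → Fin N → ℂ) (e : Fin L → ℂ)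
    (d0 : Fin s → ℝ) (ρ μ : ℝ) (dd : Fin s → ℝ) (ε : ℝ)
    (h : Fin s → Fin K → ℂ) (x : Fin s → Fin N → ℂ) : Prop :=
  Ftil b a h0 x0 e ρ μ dd h x ≤ ε ^ 2 * dtot d0 ^ 2 / (3 * (s : ℝ) * kappa d0 ^ 2) + vnormSq e

/-- The Local Restricted Isometry Property on `𝒩_d ∩ 𝒩_μ ∩ 𝒩_ε`. -/
def LocalRIP {K N L s : ℕ} (b : Fin L → Fin K → ℂ) (a : Fin s → Fin L → Fin N → ℂ)
    (h0 : Fin s → Fin K → ℂ) (x0 : Fin s → Fin N → ℂ)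
    (d0 : Fin s → ℝ) (μ ε : ℝ) : Prop :=
  ∀ (h : Fin s → Fin K → ℂ) (x : Fin s → Fin N → ℂ),
    inNd d0 h x → inNmu b d0 μ h → inNeps h0 x0 d0 ε h x →
      (2 / 3) * famFrobSq (fun i => Hmap h x i - Hmap h0 x0 i)
          ≤ vnormSq (calA b a fun i => Hmap h x i - Hmap h0 x0 i)
      ∧ vnormSq (calA b a fun i => Hmap h x i - Hmap h0 x0 i)
          ≤ (3 / 2) * famFrobSq (fun i => Hmap h x i - Hmap h0 x0 i)

/-- `α_{i1} = ⟨h_{i0}, hᵢ⟩ / d_{i0}`. -/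
def alpha1 {K s : ℕ} (h0 : Fin s → Fin K → ℂ) (d0 : Fin s → ℝ)
    (h : Fin s → Fin K → ℂ) (i : Fin s) : ℂ :=
  vinner (h0 i) (h i) / ((d0 i : ℝ) : ℂ)

/-- `α_{i2} = ⟨x_{i0}, xᵢ⟩ / d_{i0}`. -/
def alpha2 {N s : ℕ} (x0 : Fin s → Fin N → ℂ) (d0 : Fin s → ℝ)
    (x : Fin s → Fin N → ℂ) (i : Fin s) : ℂ :=
  vinner (x0 i) (x i) / ((d0 i : ℝ) : ℂ)

/-- `δ₀ = δ/10`. -/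
def delta0 {K N s : ℕ} (h0 : Fin s → Fin K → ℂ) (x0 : Fin s → Fin N → ℂ)
    (d0 : Fin s → ℝ) (h : Fin s → Fin K → ℂ) (x : Fin s → Fin N → ℂ) : ℝ :=
  deltaTot h0 x0 d0 h x / 10

/-- `αᵢ = (1−δ₀)α_{i1}` if `‖hᵢ‖ ≥ ‖xᵢ‖`, else `1/((1−δ₀) conj(α_{i2}))`. -/
def alphaC {K N s : ℕ} (h0 : Fin s → Fin K → ℂ) (x0 : Fin s → Fin N → ℂ)
    (d0 : Fin s → ℝ) (h : Fin s → Fin K → ℂ) (x : Fin s → Fin N → ℂ) (i : Fin s) : ℂ :=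
  if vnorm (x i) ≤ vnorm (h i)
  then ((1 - delta0 h0 x0 d0 h x : ℝ) : ℂ) * alpha1 h0 d0 h i
  else 1 / (((1 - delta0 h0 x0 d0 h x : ℝ) : ℂ) * conj (alpha2 x0 d0 x i))

/-- `Δhᵢ = hᵢ − αᵢ h_{i0}`. -/
def dh {K N s : ℕ} (h0 : Fin s → Fin K → ℂ) (x0 : Fin s → Fin N → ℂ)
    (d0 : Fin s → ℝ) (h : Fin s → Fin K → ℂ) (x : Fin s → Fin N → ℂ) (i : Fin s) :
    Fin K → ℂ :=
  fun k => h i k - alphaC h0 x0 d0 h x i * h0 i k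

/-- `Δxᵢ = xᵢ − conj(αᵢ)⁻¹ x_{i0}`. -/
def dx {K N s : ℕ} (h0 : Fin s → Fin K → ℂ) (x0 : Fin s → Fin N → ℂ)
    (d0 : Fin s → ℝ) (h : Fin s → Fin K → ℂ) (x : Fin s → Fin N → ℂ) (i : Fin s) :
    Fin N → ℂ :=
  fun j => x i j - (conj (alphaC h0 x0 d0 h x i))⁻¹ * x0 i j

/-- `σ²_max(h,x) = maxₗ Σᵢ |bₗ*hᵢ|² ‖xᵢ‖²`. -/
def sigmaMaxSq {K N L s : ℕ} (b : Fin L → Fin K → ℂ)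
    (h : Fin s → Fin K → ℂ) (x : Fin s → Fin N → ℂ) : ℝ :=
  ⨆ l : Fin L, ∑ i, ‖vinner (b l) (h i)‖ ^ 2 * vnormSq (x i)

/-- The rank-one bound (Lemma: `𝒜` on block-diagonal matrices with rank-1 blocks). -/
def RankOneBound {K N L s : ℕ} (b : Fin L → Fin K → ℂ)
    (a : Fin s → Fin L → Fin N → ℂ) : Prop :=
  ∀ (h : Fin s → Fin K → ℂ) (x : Fin s → Fin N → ℂ),
    vnormSq (calA b a (Hmap h x)) ≤
      4 / 3 * famFrobSq (Hmap h x)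
      + 2 * Real.sqrt (2 * (s : ℝ) * famFrobSq (Hmap h x) * sigmaMaxSq b h x
          * ((K : ℝ) + N) * Real.log L)
      + 8 * (s : ℝ) * sigmaMaxSq b h x * ((K : ℝ) + N) * Real.log L

/-- The subspace `Tᵢ = {h_{i0} v* + u x_{i0}*}`. -/
def Tspace {K N : ℕ} (h0i : Fin K → ℂ) (x0i : Fin N → ℂ) :
    Set (Matrix (Fin K) (Fin N) ℂ) :=
  {Z | ∃ (u : Fin K → ℂ) (v : Fin N → ℂ), Z = rankOne h0i v + rankOne u x0i}

/-- `P` is the orthogonal projection onto `Tᵢ` w.r.t. the Frobenius inner product. -/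
def IsFrobProj {K N : ℕ} (h0i : Fin K → ℂ) (x0i : Fin N → ℂ)
    (P : Matrix (Fin K) (Fin N) ℂ → Matrix (Fin K) (Fin N) ℂ) : Prop :=
  ∀ Z, P Z ∈ Tspace h0i x0i ∧ ∀ W ∈ Tspace h0i x0i, finner W (Z - P Z) = 0

/-- Operator norm of `𝒜ᵢ` from `(ℂ^{K×N}, ‖·‖_F)` to `(ℂ^L, ‖·‖)`. -/
def calAiOpNorm {K N L : ℕ} (b : Fin L → Fin K → ℂ) (a : Fin L → Fin N → ℂ) : ℝ :=
  sSup {r : ℝ | ∃ Z : Matrix (Fin K) (Fin N) ℂ, frob Z ≤ 1 ∧ r = vnorm (calAi b a Z)}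

/-- Operator norm of `𝒜` from block-diagonal matrices with `‖·‖_F` to `ℂ^L`. -/
def calAOpNorm {K N L s : ℕ} (b : Fin L → Fin K → ℂ)
    (a : Fin s → Fin L → Fin N → ℂ) : ℝ :=
  sSup {r : ℝ | ∃ Z : Fin s → Matrix (Fin K) (Fin N) ℂ, famFrob Z ≤ 1 ∧ r = vnorm (calA b a Z)}

/-- Norm of a stacked vector in `ℂ^{ns}`. -/
def stackNorm {n s : ℕ} (u : Fin s → Fin n → ℂ) : ℝ := Real.sqrt (∑ i, vnormSq (u i))

/-- Norm of a point `z = (h,x) ∈ ℂ^{s(K+N)}`. -/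
def pairNorm {K N s : ℕ} (u : Fin s → Fin K → ℂ) (v : Fin s → Fin N → ℂ) : ℝ :=
  Real.sqrt (∑ i, vnormSq (u i) + ∑ i, vnormSq (v i))

/-- `z + t • w` componentwise, `t` real. -/
def shiftV {n s : ℕ} (u w : Fin s → Fin n → ℂ) (t : ℝ) : Fin s → Fin n → ℂ :=
  fun i k => u i k + (t : ℂ) * w i k

/-- `σ_max(h) = maxₗ √(Σᵢ |bₗ*hᵢ|²)` (unit `xᵢ`'s). -/
def sigmaMaxU {K L s : ℕ} (b : Fin L → Fin K → ℂ) (h : Fin s → Fin K → ℂ) : ℝ :=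
  ⨆ l, Real.sqrt (∑ i, ‖vinner (b l) (h i)‖ ^ 2)

section Lemmas

lemma vnormSq_nonneg {n : ℕ} (v : Fin n → ℂ) : 0 ≤ vnormSq v :=
  Finset.sum_nonneg fun _ _ => sq_nonneg _

lemma vnorm_nonneg {n : ℕ} (v : Fin n → ℂ) : 0 ≤ vnorm v := Real.sqrt_nonneg _

lemma vnorm_sq_eq {n : ℕ} (v : Fin n → ℂ) : vnorm v ^ 2 = vnormSq v :=
  Real.sq_sqrt (vnormSq_nonneg v)

lemma vnorm_eq_norm {n : ℕ} (v : Fin n → ℂ) :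
    vnorm v = ‖(WithLp.equiv 2 (Fin n → ℂ)).symm v‖ := by
  rw [EuclideanSpace.norm_eq]; rfl

lemma vinner_eq_inner {n : ℕ} (u v : Fin n → ℂ) :
    vinner u v = (inner ℂ ((WithLp.equiv 2 (Fin n → ℂ)).symm u)
      ((WithLp.equiv 2 (Fin n → ℂ)).symm v) : ℂ) := by
  rw [PiLp.inner_apply]
  exact Finset.sum_congr rfl fun j _ => by simp [RCLike.inner_apply, mul_comm]

lemma norm_vinner_le {n : ℕ} (u v : Fin n → ℂ) : ‖vinner u v‖ ≤ vnorm u * vnorm v := by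
  rw [vinner_eq_inner, vnorm_eq_norm, vnorm_eq_norm]
  exact norm_inner_le_norm _ _

lemma vinner_self {n : ℕ} (v : Fin n → ℂ) : vinner v v = (vnormSq v : ℝ) := by
  unfold vinner vnormSq
  push_cast
  refine Finset.sum_congr rfl fun j _ => ?_
  rw [mul_comm, Complex.mul_conj']

lemma frobSq_nonneg {K N : ℕ} (Z : Matrix (Fin K) (Fin N) ℂ) : 0 ≤ frobSq Z :=
  Finset.sum_nonneg fun _ _ => Finset.sum_nonneg fun _ _ => sq_nonneg _

lemma frob_nonneg {K N : ℕ} (Z : Matrix (Fin K) (Fin N) ℂ) : 0 ≤ frob Z := Real.sqrt_nonneg _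

lemma frob_sq_eq {K N : ℕ} (Z : Matrix (Fin K) (Fin N) ℂ) : frob Z ^ 2 = frobSq Z :=
  Real.sq_sqrt (frobSq_nonneg Z)

lemma famFrobSq_nonneg {K N s : ℕ} (Z : Fin s → Matrix (Fin K) (Fin N) ℂ) : 0 ≤ famFrobSq Z :=
  Finset.sum_nonneg fun _ _ => frobSq_nonneg _

lemma famFrob_sq_eq {K N s : ℕ} (Z : Fin s → Matrix (Fin K) (Fin N) ℂ) :
    famFrob Z ^ 2 = famFrobSq Z := Real.sq_sqrt (famFrobSq_nonneg Z)


lemma vnormSq_mulVec_le {K N : ℕ} (M : Matrix (Fin K) (Fin N) ℂ) (v : Fin N → ℂ) :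
    vnormSq (M.mulVec v) ≤ frobSq M * vnormSq v := by
  unfold vnormSq frobSq
  rw [Finset.sum_mul]
  refine Finset.sum_le_sum fun k _ => ?_
  have h1 : M.mulVec v k = vinner (fun j => conj (M k j)) v := by
    simp [Matrix.mulVec, dotProduct, vinner]
  rw [h1]
  have h2 : ‖vinner (fun j => conj (M k j)) v‖ ^ 2
      ≤ (vnorm (fun j => conj (M k j)) * vnorm v) ^ 2 :=
    pow_le_pow_left₀ (norm_nonneg _) (norm_vinner_le _ _) 2
  rw [mul_pow, vnorm_sq_eq, vnorm_sq_eq] at h2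
  simpa [vnormSq] using h2

lemma vnorm_mulVec_le_frob {K N : ℕ} (M : Matrix (Fin K) (Fin N) ℂ) (v : Fin N → ℂ) :
    vnorm (M.mulVec v) ≤ frob M * vnorm v := by
  unfold vnorm frob
  rw [← Real.sqrt_mul (frobSq_nonneg M)]
  exact Real.sqrt_le_sqrt (vnormSq_mulVec_le M v)

lemma opNorm_bddAbove {K N : ℕ} (M : Matrix (Fin K) (Fin N) ℂ) :
    BddAbove {r : ℝ | ∃ v : Fin N → ℂ, vnorm v ≤ 1 ∧ r = vnorm (M.mulVec v)} := by
  refine ⟨frob M, ?_⟩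
  rintro r ⟨v, hv, rfl⟩
  calc vnorm (M.mulVec v) ≤ frob M * vnorm v := vnorm_mulVec_le_frob M v
    _ ≤ frob M * 1 := by
        exact mul_le_mul_of_nonneg_left hv (frob_nonneg M)
    _ = frob M := mul_one _

lemma vnorm_zero {n : ℕ} : vnorm (fun _ : Fin n => (0 : ℂ)) = 0 := by
  simp [vnorm, vnormSq]

lemma opNorm_nonneg {K N : ℕ} (M : Matrix (Fin K) (Fin N) ℂ) : 0 ≤ opNorm M := by
  refine le_csSup (opNorm_bddAbove M) ⟨fun _ => 0, by rw [vnorm_zero]; norm_num, ?_⟩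
  rw [show (fun _ : Fin N => (0:ℂ)) = (0 : Fin N → ℂ) from rfl, Matrix.mulVec_zero]
  exact vnorm_zero.symm

lemma vnorm_smul {n : ℕ} (c : ℝ) (hc : 0 ≤ c) (v : Fin n → ℂ) :
    vnorm (fun j => (c : ℂ) * v j) = c * vnorm v := by
  unfold vnorm vnormSq
  simp only [norm_mul, Complex.norm_real, mul_pow]
  rw [← Finset.mul_sum]
  rw [Real.sqrt_mul (by positivity)]
  congr 1
  rw [Real.norm_eq_abs, abs_of_nonneg hc] -- maybe not needed
  rw [Real.sqrt_sq hc]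

lemma vnorm_mulVec_le_op {K N : ℕ} (M : Matrix (Fin K) (Fin N) ℂ) (v : Fin N → ℂ) :
    vnorm (M.mulVec v) ≤ opNorm M * vnorm v := by
  rcases eq_or_lt_of_le (vnorm_nonneg v) with h0 | h0
  · have hsq : vnormSq v = 0 := by rw [← vnorm_sq_eq, ← h0]; ring
    have : vnormSq (M.mulVec v) = 0 := by
      have h1 := vnormSq_mulVec_le M v
      rw [hsq, mul_zero] at h1
      exact le_antisymm h1 (vnormSq_nonneg _)
    rw [vnorm, this, Real.sqrt_zero, ← h0, mul_zero]
  · set c := vnorm v with hc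
    have key : vnorm (M.mulVec (fun j => ((c⁻¹ : ℝ) : ℂ) * v j)) ≤ opNorm M := by
      refine le_csSup (opNorm_bddAbove M) ⟨_, ?_, rfl⟩
      rw [vnorm_smul c⁻¹ (by positivity)]
      rw [inv_mul_cancel₀ (ne_of_gt h0)]
    have hmv : M.mulVec (fun j => ((c⁻¹ : ℝ) : ℂ) * v j)
        = fun k => ((c⁻¹ : ℝ) : ℂ) * M.mulVec v k := by
      funext k
      simp only [Matrix.mulVec, dotProduct, Finset.mul_sum]
      refine Finset.sum_congr rfl fun j _ => by ring
    rw [hmv, vnorm_smul c⁻¹ (by positivity)] at key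
    calc vnorm (M.mulVec v) = c * (c⁻¹ * vnorm (M.mulVec v)) := by
          field_simp
      _ ≤ c * opNorm M := mul_le_mul_of_nonneg_left key (le_of_lt h0)
      _ = opNorm M * c := mul_comm _ _

lemma frobSq_rankOne {K N : ℕ} (u : Fin K → ℂ) (v : Fin N → ℂ) :
    frobSq (rankOne u v) = vnormSq u * vnormSq v := by
  unfold frobSq rankOne vnormSq
  rw [Finset.sum_mul_sum]
  simp [norm_mul, mul_pow]

lemma frob_rankOne {K N : ℕ} (u : Fin K → ℂ) (v : Fin N → ℂ) :
    frob (rankOne u v) = vnorm u * vnorm v := by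
  unfold frob vnorm
  rw [frobSq_rankOne, Real.sqrt_mul (vnormSq_nonneg u)]

lemma finner_rankOne {K N : ℕ} (M : Matrix (Fin K) (Fin N) ℂ) (u : Fin K → ℂ)
    (v : Fin N → ℂ) : finner M (rankOne u v) = conj (vinner u (M.mulVec v)) := by
  simp only [finner, rankOne, vinner, Matrix.mulVec, dotProduct, Matrix.of_apply,
    map_sum, map_mul, Complex.conj_conj, Finset.mul_sum]
  refine Finset.sum_congr rfl fun k _ => Finset.sum_congr rfl fun j _ => by ring

lemma norm_finner_rankOne_le {K N : ℕ} (M : Matrix (Fin K) (Fin N) ℂ) (u : Fin K → ℂ)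
    (v : Fin N → ℂ) : ‖finner M (rankOne u v)‖ ≤ opNorm M * (vnorm u * vnorm v) := by
  rw [finner_rankOne, RCLike.norm_conj]
  calc ‖vinner u (M.mulVec v)‖ ≤ vnorm u * vnorm (M.mulVec v) := norm_vinner_le _ _
    _ ≤ vnorm u * (opNorm M * vnorm v) :=
        mul_le_mul_of_nonneg_left (vnorm_mulVec_le_op M v) (vnorm_nonneg u)
    _ = opNorm M * (vnorm u * vnorm v) := by ring


lemma norm_add_sq_c (z w : ℂ) : ‖z + w‖ ^ 2 = ‖z‖ ^ 2 + ‖w‖ ^ 2 + 2 * (conj z * w).re := by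
  rw [Complex.sq_norm,
    Complex.sq_norm, Complex.sq_norm, Complex.normSq_add]
  congr 1
  have h : z * conj w = conj (conj z * w) := by rw [map_mul, Complex.conj_conj, mul_comm]
  rw [h, Complex.conj_re]

lemma norm_sub_sq_c (z w : ℂ) : ‖z - w‖ ^ 2 = ‖z‖ ^ 2 + ‖w‖ ^ 2 - 2 * (conj w * z).re := by
  rw [Complex.sq_norm,
    Complex.sq_norm, Complex.sq_norm, Complex.normSq_sub]
  congr 2
  rw [mul_comm]

lemma finner_add {K N : ℕ} (M A B : Matrix (Fin K) (Fin N) ℂ) :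
    finner M (A + B) = finner M A + finner M B := by
  simp [finner, Matrix.add_apply, mul_add, Finset.sum_add_distrib]

lemma finner_sub {K N : ℕ} (M A B : Matrix (Fin K) (Fin N) ℂ) :
    finner M (A - B) = finner M A - finner M B := by
  simp [finner, Matrix.sub_apply, mul_sub, Finset.sum_sub_distrib]

lemma frobSq_add_of_orth {K N : ℕ} (A B : Matrix (Fin K) (Fin N) ℂ)
    (h : finner A B = 0) : frobSq (A + B) = frobSq A + frobSq B := by
  have key : frobSq (A + B) = frobSq A + frobSq B + 2 * (finner A B).re := by
    unfold frobSq finner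
    rw [Complex.re_sum, Finset.mul_sum, ← Finset.sum_add_distrib, ← Finset.sum_add_distrib]
    refine Finset.sum_congr rfl fun k _ => ?_
    rw [Complex.re_sum, Finset.mul_sum, ← Finset.sum_add_distrib, ← Finset.sum_add_distrib]
    refine Finset.sum_congr rfl fun j _ => ?_
    simpa using norm_add_sq_c (A k j) (B k j)
  rw [key, h]
  simp

lemma finner_rankOne_rankOne {K N : ℕ} (u u' : Fin K → ℂ) (v v' : Fin N → ℂ) :
    finner (rankOne u v) (rankOne u' v') = vinner u u' * conj (vinner v v') := by
  simp only [finner, rankOne, vinner, Matrix.of_apply, map_sum, map_mul, Complex.conj_conj]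
  rw [Finset.sum_mul_sum]
  refine Finset.sum_congr rfl fun k _ => Finset.sum_congr rfl fun j _ => by ring

lemma vnorm_eq_zero_iff {n : ℕ} (v : Fin n → ℂ) (h : vnormSq v = 0) : v = fun _ => 0 := by
  funext j
  have h1 : ∀ i ∈ Finset.univ, (0:ℝ) ≤ ‖v i‖ ^ 2 := fun i _ => sq_nonneg _
  have h2 := (Finset.sum_eq_zero_iff_of_nonneg h1).1 h j (Finset.mem_univ j)
  have := pow_eq_zero_iff (n := 2) (by norm_num) |>.1 h2
  simpa using this

/-- Rank-two bound: `|⟨M, hx* − gy*⟩| ≤ √2 ‖M‖ ‖hx* − gy*‖_F`. -/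
lemma norm_finner_sub_rankOne_le {K N : ℕ} (M : Matrix (Fin K) (Fin N) ℂ)
    (p : Fin K → ℂ) (q : Fin N → ℂ) (p0 : Fin K → ℂ) (q0 : Fin N → ℂ) :
    ‖finner M (rankOne p q - rankOne p0 q0)‖
      ≤ Real.sqrt 2 * opNorm M * frob (rankOne p q - rankOne p0 q0) := by
  have hop := opNorm_nonneg M
  by_cases hq : vnormSq q = 0
  · have hq0 : q = fun _ => 0 := vnorm_eq_zero_iff q hq
    have hz : rankOne p q = 0 := by
      funext k j
      simp [rankOne, hq0]
    rw [hz, zero_sub]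
    have h1 : finner M (-(rankOne p0 q0)) = - finner M (rankOne p0 q0) := by
      have := finner_sub M 0 (rankOne p0 q0)
      simpa [finner] using this
    have h2 : frob (-(rankOne p0 q0)) = frob (rankOne p0 q0) := by
      unfold frob frobSq
      simp
    rw [h1, norm_neg, h2, frob_rankOne]
    calc ‖finner M (rankOne p0 q0)‖ ≤ opNorm M * (vnorm p0 * vnorm q0) :=
          norm_finner_rankOne_le M p0 q0
      _ ≤ Real.sqrt 2 * opNorm M * (vnorm p0 * vnorm q0) := by
          have h3 : (1:ℝ) ≤ Real.sqrt 2 := by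
            rw [show (1:ℝ) = Real.sqrt 1 from Real.sqrt_one.symm]
            exact Real.sqrt_le_sqrt (by norm_num)
          have hv : (0:ℝ) ≤ vnorm p0 * vnorm q0 :=
            mul_nonneg (vnorm_nonneg p0) (vnorm_nonneg q0)
          nlinarith [mul_nonneg (mul_nonneg (sub_nonneg.2 h3) hop) hv]
  · set c : ℂ := vinner q q0 / (vnormSq q : ℝ) with hc
    set w : Fin N → ℂ := fun j => q0 j - c * q j with hwdef
    set u : Fin K → ℂ := fun k => p k - conj c * p0 k with hudef
    have hqw : vinner q w = 0 := by
      have hcast : ((vnormSq q : ℝ) : ℂ) ≠ 0 := by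
        exact_mod_cast hq
      simp only [vinner, hwdef, mul_sub, Finset.sum_sub_distrib]
      have h1 : ∑ j, conj (q j) * (c * q j) = c * (vnormSq q : ℝ) := by
        rw [← vinner_self q, vinner, Finset.mul_sum]
        exact Finset.sum_congr rfl fun j _ => by ring
      rw [h1, hc, div_mul_cancel₀ _ hcast]
      simp [vinner]
    have hdecomp : rankOne p q - rankOne p0 q0
        = rankOne u q + rankOne (fun k => -p0 k) w := by
      funext k j
      simp only [rankOne, Matrix.sub_apply, Matrix.add_apply, Matrix.of_apply, hudef, hwdef,
        map_sub, map_mul]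
      ring
    have horth : finner (rankOne u q) (rankOne (fun k => -p0 k) w) = 0 := by
      rw [finner_rankOne_rankOne, hqw]
      simp
    have hfrob : frobSq (rankOne p q - rankOne p0 q0)
        = vnormSq u * vnormSq q + vnormSq p0 * vnormSq w := by
      rw [hdecomp, frobSq_add_of_orth _ _ horth, frobSq_rankOne, frobSq_rankOne]
      congr 2
      unfold vnormSq
      simp
    have hA := norm_finner_rankOne_le M u q
    have hB := norm_finner_rankOne_le M (fun k => -p0 k) w
    have hnegnorm : vnorm (fun k => -p0 k) = vnorm p0 := by
      unfold vnorm vnormSq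
      simp
    rw [hnegnorm] at hB
    set A := vnorm u * vnorm q with hAdef
    set B := vnorm p0 * vnorm w with hBdef
    have hAnn : 0 ≤ A := mul_nonneg (vnorm_nonneg _) (vnorm_nonneg _)
    have hBnn : 0 ≤ B := mul_nonneg (vnorm_nonneg _) (vnorm_nonneg _)
    have hfrob' : frob (rankOne p q - rankOne p0 q0) = Real.sqrt (A^2 + B^2) := by
      rw [frob, hfrob, hAdef, hBdef]
      congr 1
      rw [mul_pow, mul_pow, vnorm_sq_eq, vnorm_sq_eq, vnorm_sq_eq, vnorm_sq_eq]
    have hsum : A + B ≤ Real.sqrt 2 * Real.sqrt (A^2 + B^2) := by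
      rw [← Real.sqrt_mul (by norm_num)]
      have h1 : (A + B)^2 ≤ 2 * (A^2 + B^2) := by nlinarith [sq_nonneg (A - B)]
      calc A + B = Real.sqrt ((A+B)^2) := (Real.sqrt_sq (by linarith)).symm
        _ ≤ Real.sqrt (2 * (A^2 + B^2)) := Real.sqrt_le_sqrt h1
    calc ‖finner M (rankOne p q - rankOne p0 q0)‖
        = ‖finner M (rankOne u q) + finner M (rankOne (fun k => -p0 k) w)‖ := by
          rw [hdecomp, finner_add]
      _ ≤ ‖finner M (rankOne u q)‖ + ‖finner M (rankOne (fun k => -p0 k) w)‖ :=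
          norm_add_le _ _
      _ ≤ opNorm M * A + opNorm M * B := add_le_add hA hB
      _ = opNorm M * (A + B) := by ring
      _ ≤ opNorm M * (Real.sqrt 2 * Real.sqrt (A^2 + B^2)) :=
          mul_le_mul_of_nonneg_left hsum hop
      _ = Real.sqrt 2 * opNorm M * frob (rankOne p q - rankOne p0 q0) := by
          rw [hfrob']
          ring


lemma triple_swap {K N L : ℕ} (f : Fin L → Fin K → Fin N → ℂ) :
    ∑ k, ∑ j, ∑ l, f l k j = ∑ l, ∑ k, ∑ j, f l k j := by
  calc ∑ k, ∑ j, ∑ l, f l k j = ∑ k, ∑ l, ∑ j, f l k j :=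
        Finset.sum_congr rfl fun k _ => Finset.sum_comm
    _ = ∑ l, ∑ k, ∑ j, f l k j := Finset.sum_comm

lemma vinner_calAi_eq {K N L : ℕ} (b : Fin L → Fin K → ℂ) (a : Fin L → Fin N → ℂ)
    (e : Fin L → ℂ) (Z : Matrix (Fin K) (Fin N) ℂ) :
    vinner e (calAi b a Z) = finner (calAdj b a e) Z := by
  simp only [vinner, calAi, finner, calAdj, Matrix.of_apply, Matrix.mulVec,
    dotProduct, map_sum, map_mul, Complex.conj_conj, Finset.mul_sum, Finset.sum_mul]
  rw [triple_swap (fun l k j => conj (e l) * conj (b l k) * a l j * Z k j)]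
  refine Finset.sum_congr rfl fun l _ => Finset.sum_congr rfl fun k _ =>
    Finset.sum_congr rfl fun j _ => by ring


lemma calA_sub {K N L s : ℕ} (b : Fin L → Fin K → ℂ) (a : Fin s → Fin L → Fin N → ℂ)
    (Z W : Fin s → Matrix (Fin K) (Fin N) ℂ) (l : Fin L) :
    calA b a (fun i => Z i - W i) l = calA b a Z l - calA b a W l := by
  simp only [calA, calAi, Matrix.sub_mulVec, vinner, Pi.sub_apply, mul_sub,
    Finset.sum_sub_distrib]

lemma vinner_calA_eq {K N L s : ℕ} (b : Fin L → Fin K → ℂ) (a : Fin s → Fin L → Fin N → ℂ)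
    (e : Fin L → ℂ) (Z : Fin s → Matrix (Fin K) (Fin N) ℂ) :
    vinner e (calA b a Z) = ∑ i, finner (calAdj b (a i) e) (Z i) := by
  simp only [vinner, calA, Finset.mul_sum]
  rw [Finset.sum_comm]
  exact Finset.sum_congr rfl fun i _ => vinner_calAi_eq b (a i) e (Z i)

lemma Fobj_expand {K N L s : ℕ} (b : Fin L → Fin K → ℂ) (a : Fin s → Fin L → Fin N → ℂ)
    (h0 : Fin s → Fin K → ℂ) (x0 : Fin s → Fin N → ℂ) (e : Fin L → ℂ)
    (h : Fin s → Fin K → ℂ) (x : Fin s → Fin N → ℂ) :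
    Fobj b a h0 x0 e h x
      = vnormSq (calA b a (fun i => Hmap h x i - Hmap h0 x0 i)) + vnormSq e
        - 2 * (vinner e (calA b a (fun i => Hmap h x i - Hmap h0 x0 i))).re := by
  set u := calA b a (fun i => Hmap h x i - Hmap h0 x0 i) with hu
  have hpt : (fun l => calA b a (Hmap h x) l - yvec b a h0 x0 e l) = fun l => u l - e l := by
    funext l
    rw [hu]
    show calA b a (Hmap h x) l - (calA b a (Hmap h0 x0) l + e l)
      = calA b a (fun i => Hmap h x i - Hmap h0 x0 i) l - e l
    rw [calA_sub]
    ring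
  unfold Fobj
  rw [hpt]
  unfold vnormSq vinner
  rw [Complex.re_sum, Finset.mul_sum, ← Finset.sum_add_distrib, ← Finset.sum_sub_distrib]
  exact Finset.sum_congr rfl fun l _ => norm_sub_sq_c (u l) (e l)

lemma sum_le_sqrt_card {s : ℕ} (f : Fin s → ℝ) (hf : ∀ i, 0 ≤ f i) :
    ∑ i, f i ≤ Real.sqrt s * Real.sqrt (∑ i, f i ^ 2) := by
  rw [← Real.sqrt_mul (by positivity)]
  have h1 : (∑ i, f i) ^ 2 ≤ (s : ℝ) * ∑ i, f i ^ 2 := by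
    have := sq_sum_le_card_mul_sum_sq (s := (Finset.univ : Finset (Fin s))) (f := f)
    simpa using this
  calc ∑ i, f i = Real.sqrt ((∑ i, f i) ^ 2) :=
        (Real.sqrt_sq (Finset.sum_nonneg fun i _ => hf i)).symm
    _ ≤ _ := Real.sqrt_le_sqrt h1

lemma le_of_sq_le_sq'' {a b : ℝ} (ha : 0 ≤ a) (hb : 0 ≤ b) (h : a ^ 2 ≤ b ^ 2) : a ≤ b := by
  nlinarith

lemma G0_nonneg (z : ℝ) : 0 ≤ G0 z := sq_nonneg _

lemma Fobj_nonneg {K N L s : ℕ} (b : Fin L → Fin K → ℂ) (a : Fin s → Fin L → Fin N → ℂ)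
    (h0 : Fin s → Fin K → ℂ) (x0 : Fin s → Fin N → ℂ) (e : Fin L → ℂ)
    (h : Fin s → Fin K → ℂ) (x : Fin s → Fin N → ℂ) : 0 ≤ Fobj b a h0 x0 e h x :=
  vnormSq_nonneg _

lemma Gi_nonneg {K N L : ℕ} (b : Fin L → Fin K → ℂ) {ρ : ℝ} (μ di : ℝ) (hρ : 0 ≤ ρ)
    (hi : Fin K → ℂ) (xi : Fin N → ℂ) : 0 ≤ Gi b ρ μ di hi xi := by
  unfold Gi
  have : 0 ≤ ∑ l, G0 ((L : ℝ) * ‖vinner (b l) hi‖ ^ 2 / (8 * di * μ ^ 2)) :=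
    Finset.sum_nonneg fun _ _ => G0_nonneg _
  have g1 := G0_nonneg (vnormSq hi / (2 * di))
  have g2 := G0_nonneg (vnormSq xi / (2 * di))
  exact mul_nonneg hρ (by linarith)

lemma Greg_nonneg {K N L s : ℕ} (b : Fin L → Fin K → ℂ) {ρ : ℝ} (μ : ℝ) (dd : Fin s → ℝ)
    (hρ : 0 ≤ ρ) (h : Fin s → Fin K → ℂ) (x : Fin s → Fin N → ℂ) :
    0 ≤ Greg b ρ μ dd h x :=
  Finset.sum_nonneg fun i _ => Gi_nonneg b μ (dd i) hρ (h i) (x i)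

lemma G0_extract {t : ℝ} (hG : G0 t ≤ 0.51) : t ≤ 1.715 := by
  unfold G0 at hG
  have h1 : t - 1 ≤ max (t - 1) 0 := le_max_left _ _
  have h2 : (0:ℝ) ≤ max (t - 1) 0 := le_max_right _ _
  nlinarith



lemma quad_root {t P : ℝ} (ht0 : 0 ≤ t) (hP : 0 < P)
    (h : 2 * t ^ 2 ≤ P ^ 2 + 0.6 * (P * t)) : t ≤ 0.88 * P := by
  by_contra hcon
  push_neg at hcon
  have h1 : (0:ℝ) < (t - 0.88 * P) * (2 * t + 1.16 * P) :=
    mul_pos (by linarith) (by linarith)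
  nlinarith [h1, mul_pos hP hP]

set_option maxHeartbeats 1000000 in
/-- Key contraction lemma: on `𝒩_F̃ ∩ 𝒩_ε`, in fact `δᵢ ≤ 0.88 ε`. -/
lemma gap_lemma {K N L s : ℕ} (hs : 0 < s)
    (b : Fin L → Fin K → ℂ) (a : Fin s → Fin L → Fin N → ℂ)
    (h0 : Fin s → Fin K → ℂ) (x0 : Fin s → Fin N → ℂ)
    (d0 : Fin s → ℝ) (hd0 : ∀ i, 0 < d0 i)
    (e : Fin L → ℂ) (μ ρ d ε : ℝ) (dd : Fin s → ℝ)
    (hμ : 0 < μ) (hε : 0 < ε) (hε15 : ε ≤ 1 / 15)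
    (hdd : ∀ i, 0.9 * d0 i ≤ dd i ∧ dd i ≤ 1.1 * d0 i)
    (hdlow : 0.9 * dtot d0 ≤ d)
    (hρ : d ^ 2 + 2 * vnormSq e ≤ ρ)
    (hRIP : LocalRIP b a h0 x0 d0 μ ε)
    (hAe : AadjNorm b a e ≤ ε * dtot d0 / (10 * Real.sqrt 2 * (s : ℝ) * kappa d0))
    (h : Fin s → Fin K → ℂ) (x : Fin s → Fin N → ℂ)
    (hNF : inNF b a h0 x0 e d0 ρ μ dd ε h x)
    (hNe : inNeps h0 x0 d0 ε h x) :
    ∀ i, deltaI (h0 i) (x0 i) (d0 i) (h i) (x i) ≤ 0.88 * ε := by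
  haveI : Nonempty (Fin s) := Fin.pos_iff_nonempty.1 hs
  have hsR : (1 : ℝ) ≤ (s : ℝ) := by exact_mod_cast hs
  set sr : ℝ := Real.sqrt s with hsr
  have hsr_pos : 0 < sr := Real.sqrt_pos.2 (by positivity)
  have hsr_sq : sr ^ 2 = (s : ℝ) := Real.sq_sqrt (by positivity)
  -- kappa facts
  obtain ⟨j0, -, hj0⟩ := Finset.exists_min_image (Finset.univ : Finset (Fin s)) d0
    Finset.univ_nonempty
  have hj0' : ∀ i, d0 j0 ≤ d0 i := fun i => hj0 i (Finset.mem_univ i)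
  have hinf : (⨅ i, d0 i) = d0 j0 :=
    le_antisymm (ciInf_le (Set.finite_range d0).bddBelow j0) (le_ciInf hj0')
  have hsup_le : ∀ i, d0 i ≤ ⨆ i, d0 i := fun i => le_ciSup (Set.finite_range d0).bddAbove i
  set κ : ℝ := kappa d0 with hκdef
  have hκ_eq : κ = (⨆ i, d0 i) / d0 j0 := by rw [hκdef, kappa, hinf]
  have hκ1 : 1 ≤ κ := by
    rw [hκ_eq]
    exact (one_le_div (hd0 j0)).2 (hsup_le j0)
  have hκ0 : 0 < κ := lt_of_lt_of_le one_pos hκ1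
  have hsup_eq : (⨆ i, d0 i) = κ * d0 j0 := by
    rw [hκ_eq, div_mul_cancel₀ _ (ne_of_gt (hd0 j0))]
  have hκd : ∀ i, ∀ i', d0 i' ≤ κ * d0 i := fun i i' =>
    le_trans (hsup_le i') (by rw [hsup_eq]; exact mul_le_mul_of_nonneg_left (hj0' i) (le_of_lt hκ0))
  set dt : ℝ := dtot d0 with hdt
  have hdt_pos : 0 < dt := by
    rw [hdt, dtot]
    exact Real.sqrt_pos.2 (Finset.sum_pos (fun i _ => pow_pos (hd0 i) 2) Finset.univ_nonempty)
  have hdt_le : ∀ i, dt ≤ sr * (κ * d0 i) := by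
    intro i
    rw [hdt, dtot]
    have h1 : ∑ j, d0 j ^ 2 ≤ (s : ℝ) * (κ * d0 i) ^ 2 := by
      calc ∑ j, d0 j ^ 2 ≤ ∑ _j : Fin s, (κ * d0 i) ^ 2 :=
            Finset.sum_le_sum fun j _ => pow_le_pow_left₀ (le_of_lt (hd0 j)) (hκd i j) 2
        _ = (s : ℝ) * (κ * d0 i) ^ 2 := by simp [mul_comm]
    calc Real.sqrt (∑ j, d0 j ^ 2) ≤ Real.sqrt ((s : ℝ) * (κ * d0 i) ^ 2) :=
          Real.sqrt_le_sqrt h1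
      _ = sr * (κ * d0 i) := by
          rw [Real.sqrt_mul (by positivity), Real.sqrt_sq (mul_nonneg hκ0.le (hd0 i).le)]
  -- the constant A
  set A : ℝ := ε ^ 2 * dt ^ 2 / (3 * (s : ℝ) * κ ^ 2) with hA
  set ve : ℝ := vnormSq e with hve
  have hve0 : 0 ≤ ve := vnormSq_nonneg e
  have hdsq : (0.9 * dt) ^ 2 ≤ d ^ 2 := pow_le_pow_left₀ (by positivity) hdlow 2
  have hρ_big : 0.81 * dt ^ 2 + 2 * ve ≤ ρ := by linarith only [hdsq, hρ]
  have hρ_pos : 0 < ρ := by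
    have h1 : 0 < dt ^ 2 := pow_pos hdt_pos 2
    linarith only [h1, hρ_big, hve0]
  have hAsmall : A + ve ≤ 0.51 * ρ := by
    have hκsq : 1 ≤ κ ^ 2 := by nlinarith [hκ1]
    have hsκ : (1 : ℝ) * 1 ≤ (s : ℝ) * κ ^ 2 := mul_le_mul hsR hκsq (by norm_num) (by positivity)
    have h1 : A ≤ ε ^ 2 * dt ^ 2 / 3 :=
      div_le_div_of_nonneg_left (by positivity) (by norm_num) (by linarith only [hsκ])
    have h2 : ε ^ 2 ≤ 1 / 225 := by nlinarith [hε15, hε]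
    have h3 : ε ^ 2 * dt ^ 2 ≤ (1 / 225) * dt ^ 2 :=
      mul_le_mul_of_nonneg_right h2 (sq_nonneg dt)
    linarith only [h1, h3, hρ_big, hve0, sq_nonneg dt]
  have hNF' : Ftil b a h0 x0 e ρ μ dd h x ≤ A + ve := hNF
  -- extract G0 bounds
  have hGi_le : ∀ i, Gi b ρ μ (dd i) (h i) (x i) ≤ 0.51 * ρ := by
    intro i
    have h1 : Gi b ρ μ (dd i) (h i) (x i) ≤ Greg b ρ μ dd h x :=
      Finset.single_le_sum (f := fun i => Gi b ρ μ (dd i) (h i) (x i))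
        (fun i _ => Gi_nonneg b μ (dd i) (le_of_lt hρ_pos) (h i) (x i)) (Finset.mem_univ i)
    have h2 : Greg b ρ μ dd h x ≤ Ftil b a h0 x0 e ρ μ dd h x := by
      unfold Ftil
      linarith only [Fobj_nonneg b a h0 x0 e h x]
    linarith only [h1, h2, hNF', hAsmall]
  have hdd_pos : ∀ i, 0 < dd i := fun i => lt_of_lt_of_le (by linarith only [hd0 i]) (hdd i).1
  have hg3 : ∀ i, G0 (vnormSq (h i) / (2 * dd i)) ≤ 0.51
      ∧ G0 (vnormSq (x i) / (2 * dd i)) ≤ 0.51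
      ∧ ∀ l, G0 ((L : ℝ) * ‖vinner (b l) (h i)‖ ^ 2 / (8 * dd i * μ ^ 2)) ≤ 0.51 := by
    intro i
    have hGi := hGi_le i
    unfold Gi at hGi
    have hS : 0 ≤ ∑ l, G0 ((L : ℝ) * ‖vinner (b l) (h i)‖ ^ 2 / (8 * dd i * μ ^ 2)) :=
      Finset.sum_nonneg fun _ _ => G0_nonneg _
    have g1 := G0_nonneg (vnormSq (h i) / (2 * dd i))
    have g2 := G0_nonneg (vnormSq (x i) / (2 * dd i))
    have hsum : G0 (vnormSq (h i) / (2 * dd i)) + G0 (vnormSq (x i) / (2 * dd i))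
        + ∑ l, G0 ((L : ℝ) * ‖vinner (b l) (h i)‖ ^ 2 / (8 * dd i * μ ^ 2)) ≤ 0.51 :=
      (mul_le_mul_iff_right₀ hρ_pos).1 (by linarith only [hGi])
    refine ⟨by linarith only [hsum, g2, hS], by linarith only [hsum, g1, hS], fun l => ?_⟩
    have hterm := Finset.single_le_sum
      (f := fun l => G0 ((L : ℝ) * ‖vinner (b l) (h i)‖ ^ 2 / (8 * dd i * μ ^ 2)))
      (fun l _ => G0_nonneg _) (Finset.mem_univ l)
    linarith only [hsum, g1, g2, hterm]
  have hNd : inNd d0 h x := by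
    intro i
    obtain ⟨hg1, hg2, -⟩ := hg3 i
    have e1 := G0_extract hg1
    have e2 := G0_extract hg2
    have hddi := hdd_pos i
    have hub : vnormSq (h i) ≤ 4 * d0 i := by
      have h1 := (div_le_iff₀ (by linarith only [hddi] : (0:ℝ) < 2 * dd i)).1 e1
      linarith only [h1, (hdd i).2, hd0 i]
    have hub2 : vnormSq (x i) ≤ 4 * d0 i := by
      have h1 := (div_le_iff₀ (by linarith only [hddi] : (0:ℝ) < 2 * dd i)).1 e2
      linarith only [h1, (hdd i).2, hd0 i]
    constructor
    · refine le_of_sq_le_sq'' (vnorm_nonneg _) (by positivity) ?_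
      rw [vnorm_sq_eq, mul_pow, Real.sq_sqrt (le_of_lt (hd0 i))]
      linarith only [hub]
    · refine le_of_sq_le_sq'' (vnorm_nonneg _) (by positivity) ?_
      rw [vnorm_sq_eq, mul_pow, Real.sq_sqrt (le_of_lt (hd0 i))]
      linarith only [hub2]
  have hNmu : inNmu b d0 μ h := by
    intro i l
    obtain ⟨-, -, hg⟩ := hg3 i
    have e1 := G0_extract (hg l)
    have hddi := hdd_pos i
    have hub : (L : ℝ) * ‖vinner (b l) (h i)‖ ^ 2 ≤ 16 * d0 i * μ ^ 2 := by
      have h1 := (div_le_iff₀ (by positivity : (0:ℝ) < 8 * dd i * μ ^ 2)).1 e1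
      have h2 : dd i * μ ^ 2 ≤ 1.1 * d0 i * μ ^ 2 := by
        have h3 := mul_le_mul_of_nonneg_right (hdd i).2 (sq_nonneg μ)
        linarith only [h3]
      linarith only [h1, h2, mul_nonneg (hd0 i).le (sq_nonneg μ)]
    refine le_of_sq_le_sq'' (by positivity) (by positivity) ?_
    rw [mul_pow, mul_pow, mul_pow, Real.sq_sqrt (by positivity : (0:ℝ) ≤ (L:ℝ)),
      Real.sq_sqrt (le_of_lt (hd0 i))]
    linarith only [hub]
  -- local RIP lower bound
  obtain ⟨hlow, -⟩ := hRIP h x hNd hNmu hNe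
  set D : Fin s → Matrix (Fin K) (Fin N) ℂ := fun i => Hmap h x i - Hmap h0 x0 i with hD
  set T : ℝ := famFrobSq D with hT
  set t : ℝ := famFrob D with ht
  have hT0 : 0 ≤ T := famFrobSq_nonneg D
  have ht0 : 0 ≤ t := Real.sqrt_nonneg _
  have ht_sq : t ^ 2 = T := famFrob_sq_eq D
  -- cross term
  set η : ℝ := AadjNorm b a e with hη
  have hη0 : 0 ≤ η :=
    le_trans (opNorm_nonneg (calAdj b (a j0) e))
      (le_ciSup (f := fun i => opNorm (calAdj b (a i) e))
        (Set.finite_range fun i => opNorm (calAdj b (a i) e)).bddAbove j0)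
  have hcross : ‖vinner e (calA b a D)‖ ≤ Real.sqrt 2 * η * (sr * t) := by
    rw [vinner_calA_eq]
    have step1 : ∀ i, ‖finner (calAdj b (a i) e) (D i)‖
        ≤ Real.sqrt 2 * η * frob (D i) := by
      intro i
      have h1 := norm_finner_sub_rankOne_le (calAdj b (a i) e) (h i) (x i) (h0 i) (x0 i)
      have hop_le : opNorm (calAdj b (a i) e) ≤ η :=
        le_ciSup (Set.finite_range fun i => opNorm (calAdj b (a i) e)).bddAbove i
      have hDi : D i = rankOne (h i) (x i) - rankOne (h0 i) (x0 i) := rfl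
      rw [hDi]
      calc ‖finner (calAdj b (a i) e) (rankOne (h i) (x i) - rankOne (h0 i) (x0 i))‖
          ≤ Real.sqrt 2 * opNorm (calAdj b (a i) e)
            * frob (rankOne (h i) (x i) - rankOne (h0 i) (x0 i)) := h1
        _ ≤ Real.sqrt 2 * η * frob (rankOne (h i) (x i) - rankOne (h0 i) (x0 i)) := by
            refine mul_le_mul_of_nonneg_right ?_ (frob_nonneg _)
            exact mul_le_mul_of_nonneg_left hop_le (Real.sqrt_nonneg 2)
    calc ‖∑ i, finner (calAdj b (a i) e) (D i)‖
        ≤ ∑ i, ‖finner (calAdj b (a i) e) (D i)‖ := norm_sum_le _ _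
      _ ≤ ∑ i, Real.sqrt 2 * η * frob (D i) := Finset.sum_le_sum fun i _ => step1 i
      _ = Real.sqrt 2 * η * ∑ i, frob (D i) := by rw [Finset.mul_sum]
      _ ≤ Real.sqrt 2 * η * (sr * t) := by
          refine mul_le_mul_of_nonneg_left ?_ (mul_nonneg (Real.sqrt_nonneg 2) hη0)
          have h2 : ∑ i, frob (D i) ≤ sr * Real.sqrt (∑ i, frob (D i) ^ 2) :=
            sum_le_sqrt_card _ fun i => frob_nonneg _
          have h3 : (∑ i, frob (D i) ^ 2) = T := by
            rw [hT, famFrobSq]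
            exact Finset.sum_congr rfl fun i _ => frob_sq_eq (D i)
          rw [h3] at h2
          exact h2
  -- assemble the quadratic inequality
  have hFo := Fobj_expand b a h0 x0 e h x
  have hre : (vinner e (calA b a D)).re ≤ ‖vinner e (calA b a D)‖ := by
    exact Complex.re_le_norm _
  have hFtil_ge : Fobj b a h0 x0 e h x ≤ A + ve := by
    have hGreg0 := Greg_nonneg b μ dd (le_of_lt hρ_pos) h x
    have heq : Ftil b a h0 x0 e ρ μ dd h x = Fobj b a h0 x0 e h x + Greg b ρ μ dd h x := rfl
    linarith only [hNF', hGreg0, heq.symm.le, heq.le]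
  have hlow' : (2/3) * T ≤ vnormSq (calA b a D) := hlow
  have hquad : (2/3) * T ≤ A + 2 * (Real.sqrt 2 * η * (sr * t)) := by
    have h1 : vnormSq (calA b a D) + ve - 2 * (vinner e (calA b a D)).re ≤ A + ve := by
      rw [← hFo]
      exact hFtil_ge
    linarith only [hcross, hre, hlow', h1]
  set P : ℝ := ε * dt / (sr * κ) with hP
  have hP_pos : 0 < P := div_pos (mul_pos hε hdt_pos) (mul_pos hsr_pos hκ0)
  have hcross2 : 2 * (Real.sqrt 2 * η * (sr * t)) ≤ (P / 5) * t := by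
    have hs2 : (0:ℝ) < Real.sqrt 2 := Real.sqrt_pos.2 (by norm_num)
    calc 2 * (Real.sqrt 2 * η * (sr * t)) = (2 * Real.sqrt 2 * sr * t) * η := by ring
      _ ≤ (2 * Real.sqrt 2 * sr * t) * (ε * dt / (10 * Real.sqrt 2 * (s : ℝ) * κ)) := by
          refine mul_le_mul_of_nonneg_left hAe ?_
          have := mul_nonneg (mul_nonneg (by positivity : (0:ℝ) ≤ 2 * Real.sqrt 2)
            hsr_pos.le) ht0
          linarith only [this]
      _ = (P / 5) * t := by
          rw [hP, show ((s : ℝ)) = sr ^ 2 from hsr_sq.symm]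
          field_simp
          ring
  have hA_eq : A = P ^ 2 / 3 := by
    rw [hA, hP, show ((s : ℝ)) = sr ^ 2 from hsr_sq.symm]
    field_simp
  have hquad2 : 2 * t ^ 2 ≤ P ^ 2 + 0.6 * (P * t) := by
    rw [ht_sq]
    rw [hA_eq] at hquad
    linarith only [hquad, hcross2]
  have ht_le : t ≤ 0.88 * P := quad_root ht0 hP_pos hquad2
  -- per-block conclusion
  intro i
  have hfrob_le : frob (D i) ≤ t := by
    rw [ht, famFrob, frob]
    refine Real.sqrt_le_sqrt ?_
    exact Finset.single_le_sum (f := fun i => frobSq (D i)) (fun i _ => frobSq_nonneg _)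
      (Finset.mem_univ i)
  have hP_le : P ≤ ε * d0 i := by
    rw [hP, div_le_iff₀ (mul_pos hsr_pos hκ0)]
    calc ε * dt ≤ ε * (sr * (κ * d0 i)) :=
          mul_le_mul_of_nonneg_left (hdt_le i) (le_of_lt hε)
      _ = ε * d0 i * (sr * κ) := by ring
  have hDi : deltaI (h0 i) (x0 i) (d0 i) (h i) (x i) = frob (D i) / d0 i := rfl
  rw [hDi, div_le_iff₀ (hd0 i)]
  calc frob (D i) ≤ t := hfrob_le
    _ ≤ 0.88 * P := ht_le
    _ ≤ 0.88 * (ε * d0 i) := by linarith only [ht_le, hP_le]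
    _ = 0.88 * ε * d0 i := by ring

lemma deltaI_continuous {K N s : ℕ} (h0i : Fin K → ℂ) (x0i : Fin N → ℂ) (d0i : ℝ)
    (h1 h2 : Fin s → Fin K → ℂ) (x1 x2 : Fin s → Fin N → ℂ) (i : Fin s) :
    Continuous fun lam : ℝ =>
      deltaI h0i x0i d0i (fun k => (1 - (lam : ℂ)) * h1 i k + (lam : ℂ) * h2 i k)
        (fun j => (1 - (lam : ℂ)) * x1 i j + (lam : ℂ) * x2 i j) := by
  unfold deltaI frob frobSq
  apply Continuous.div_const
  apply Continuous.sqrt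
  apply continuous_finset_sum
  intro k _
  apply continuous_finset_sum
  intro j _
  simp only [rankOne, Matrix.sub_apply, Matrix.of_apply]
  apply Continuous.pow
  apply Continuous.norm
  refine Continuous.sub (Continuous.mul (by fun_prop) ?_) continuous_const
  exact Complex.continuous_conj.comp (by fun_prop)

end Lemmas
/-- segment lemma. -/
theorem statement2
    {K N L s : ℕ} (hK : 0 < K) (hN : 0 < N) (hL : 0 < L) (hs : 0 < s)
    (b : Fin L → Fin K → ℂ) (hb : BtBeqI b)
    (a : Fin s → Fin L → Fin N → ℂ)
    (h0 : Fin s → Fin K → ℂ) (x0 : Fin s → Fin N → ℂ)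
    (d0 : Fin s → ℝ) (hd0 : ∀ i, 0 < d0 i)
    (hh0 : ∀ i, vnorm (h0 i) = Real.sqrt (d0 i))
    (hx0 : ∀ i, vnorm (x0 i) = Real.sqrt (d0 i))
    (e : Fin L → ℂ) (μ ρ d ε : ℝ) (dd : Fin s → ℝ)
    (hμ : 0 < μ) (hε : 0 < ε) (hε15 : ε ≤ 1 / 15)
    (hdd : ∀ i, 0.9 * d0 i ≤ dd i ∧ dd i ≤ 1.1 * d0 i)
    (hdlow : 0.9 * dtot d0 ≤ d) (hdhigh : d ≤ 1.1 * dtot d0)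
    (hρ : d ^ 2 + 2 * vnormSq e ≤ ρ)
    (hRIP : LocalRIP b a h0 x0 d0 μ ε)
    (hAe : AadjNorm b a e ≤ ε * dtot d0 / (10 * Real.sqrt 2 * (s : ℝ) * kappa d0))
    (h1 : Fin s → Fin K → ℂ) (x1 : Fin s → Fin N → ℂ)
    (h2 : Fin s → Fin K → ℂ) (x2 : Fin s → Fin N → ℂ)
    (hz1 : inNeps h0 x0 d0 ε h1 x1)
    (hseg : ∀ lam : ℝ, lam ∈ Set.Icc (0 : ℝ) 1 →
      inNF b a h0 x0 e d0 ρ μ dd ε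
        (fun i k => (1 - (lam : ℂ)) * h1 i k + (lam : ℂ) * h2 i k)
        (fun i j => (1 - (lam : ℂ)) * x1 i j + (lam : ℂ) * x2 i j)) :
    inNeps h0 x0 d0 ε h2 x2 := by
  classical
  set S : Set ℝ := Set.Icc (0:ℝ) 1 ∩ ⋂ i, {lam : ℝ |
    deltaI (h0 i) (x0 i) (d0 i) (fun k => (1 - (lam : ℂ)) * h1 i k + (lam : ℂ) * h2 i k)
      (fun j => (1 - (lam : ℂ)) * x1 i j + (lam : ℂ) * x2 i j) ≤ ε} with hS
  have h0S : (0:ℝ) ∈ S := by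
    refine ⟨⟨le_refl 0, zero_le_one⟩, Set.mem_iInter.2 fun i => ?_⟩
    have e1 : (fun k => (1 - ((0:ℝ) : ℂ)) * h1 i k + ((0:ℝ) : ℂ) * h2 i k) = h1 i := by
      funext k; push_cast; ring
    have e2 : (fun j => (1 - ((0:ℝ) : ℂ)) * x1 i j + ((0:ℝ) : ℂ) * x2 i j) = x1 i := by
      funext j; push_cast; ring
    show deltaI (h0 i) (x0 i) (d0 i) _ _ ≤ ε
    rw [e1, e2]
    exact hz1 i
  have hbdd : BddAbove S := ⟨1, fun x hx => hx.1.2⟩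
  have hne : S.Nonempty := ⟨0, h0S⟩
  have hclosed : IsClosed S := by
    refine IsClosed.inter isClosed_Icc (isClosed_iInter fun i => ?_)
    exact isClosed_le (deltaI_continuous (h0 i) (x0 i) (d0 i) h1 h2 x1 x2 i) continuous_const
  set c := sSup S with hc
  have hcS : c ∈ S := hclosed.csSup_mem hne hbdd
  have hc0 : 0 ≤ c := hcS.1.1
  have hc1 : c ≤ 1 := hcS.1.2
  have hgc : ∀ i, deltaI (h0 i) (x0 i) (d0 i)
      (fun k => (1 - (c : ℂ)) * h1 i k + (c : ℂ) * h2 i k)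
      (fun j => (1 - (c : ℂ)) * x1 i j + (c : ℂ) * x2 i j) ≤ ε :=
    fun i => Set.mem_iInter.1 hcS.2 i
  have hNe_c : inNeps h0 x0 d0 ε
      (fun i k => (1 - (c : ℂ)) * h1 i k + (c : ℂ) * h2 i k)
      (fun i j => (1 - (c : ℂ)) * x1 i j + (c : ℂ) * x2 i j) := fun i => hgc i
  have hstrict := gap_lemma hs b a h0 x0 d0 hd0 e μ ρ d ε dd hμ hε hε15 hdd hdlow hρ hRIP hAe
      _ _ (hseg c ⟨hc0, hc1⟩) hNe_c
  rcases eq_or_lt_of_le hc1 with hceq | hclt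
  · intro i
    have hgi := hgc i
    have e1 : (fun k => (1 - (c : ℂ)) * h1 i k + (c : ℂ) * h2 i k) = h2 i := by
      funext k; rw [hceq]; push_cast; ring
    have e2 : (fun j => (1 - (c : ℂ)) * x1 i j + (c : ℂ) * x2 i j) = x2 i := by
      funext j; rw [hceq]; push_cast; ring
    rw [e1, e2] at hgi
    exact hgi
  · exfalso
    set U : Set ℝ := ⋂ i, {lam : ℝ |
      deltaI (h0 i) (x0 i) (d0 i) (fun k => (1 - (lam : ℂ)) * h1 i k + (lam : ℂ) * h2 i k)
        (fun j => (1 - (lam : ℂ)) * x1 i j + (lam : ℂ) * x2 i j) < ε} with hU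
    have hUopen : IsOpen U := isOpen_iInter_of_finite fun i =>
      isOpen_lt (deltaI_continuous (h0 i) (x0 i) (d0 i) h1 h2 x1 x2 i) continuous_const
    have hcU : c ∈ U := Set.mem_iInter.2 fun i => lt_of_le_of_lt (hstrict i) (by linarith)
    obtain ⟨δ, hδ0, hball⟩ := Metric.isOpen_iff.1 hUopen c hcU
    set c' := min 1 (c + δ/2) with hc'
    have hc'le1 : c' ≤ 1 := min_le_left _ _
    have hc'gt : c < c' := lt_min hclt (by linarith)
    have hc'mem : c' ∈ Metric.ball c δ := by
      rw [Metric.mem_ball, Real.dist_eq, abs_lt]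
      have hub : c' ≤ c + δ/2 := min_le_right _ _
      constructor
      · linarith
      · linarith
    have hc'U := hball hc'mem
    rw [hU] at hc'U
    have hc'S : c' ∈ S := by
      refine ⟨⟨by linarith, hc'le1⟩, Set.mem_iInter.2 fun i => ?_⟩
      have hlt : deltaI (h0 i) (x0 i) (d0 i)
          (fun k => (1 - (c' : ℂ)) * h1 i k + (c' : ℂ) * h2 i k)
          (fun j => (1 - (c' : ℂ)) * x1 i j + (c' : ℂ) * x2 i j) < ε :=
        Set.mem_iInter.1 hc'U i
      exact le_of_lt hlt
    have hle := le_csSup hbdd hc'S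
    rw [← hc] at hle
    linarith

end RGD
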